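/- Ping-pong variant: With the setup of the concatenation lemma (H = ⟨a,b⟩ acting on X, disjoint X₁, X₂, nonempty Kᵢ ⊆ Xᵢ, and the sets W_{X→K}, W_{K→X} of words in F₂), every relator of H (nonempty reduced word w̄ ∈ F₂ with w = 1 in H) whose first and last letters are identical has an exact subword belonging to 𝓕(W_{X→K}) \ W_{K→X}, where 𝓕(W_{X→K}) is the set of nonempty words none of whose exact subwords lies in W_{X→K}. -/

import Mathlib

open Pointwise

/-- A word in the free group `F₂` on two generators (`true` ↦ `ā`, `false` ↦ `b̄`),
presented as its list of syllables `(sᵢ, nᵢ)`, is reduced if consecutive syllables use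
distinct generators and all exponents are nonzero. -/
def IsReducedWord (w : List (Bool × ℤ)) : Prop :=
  w.Chain' (fun p q => p.1 ≠ q.1) ∧ ∀ p ∈ w, p.2 ≠ 0

/-- The evaluation of a word `w̄ ∈ F₂` in the group `H = ⟨a, b⟩`. -/
def evalW {H : Type*} [Group H] (a b : H) (w : List (Bool × ℤ)) : H :=
  (w.map fun s => (if s.1 then a else b) ^ s.2).prod

/-- Membership in `W(C₁, C₂, D₁, D₂)`: the reduced word `w̄` satisfies
`w(C₁) ⊆ D₂` if `w̄ ∈ F₂^{a,a}`, `w(C₂) ⊆ D₂` if `w̄ ∈ F₂^{a,b}`,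
`w(C₁) ⊆ D₁` if `w̄ ∈ F₂^{b,a}`, and `w(C₂) ⊆ D₁` if `w̄ ∈ F₂^{b,b}`
(the source is governed by the last letter of `w̄`, which acts first, and the
target by its first letter). -/
def memW {H X : Type*} [Group H] [MulAction H X] (a b : H) (C₁ C₂ D₁ D₂ : Set X)
    (w : List (Bool × ℤ)) : Prop :=
  IsReducedWord w ∧ ∃ h : w ≠ [],
    evalW a b w • (if (w.getLast h).1 then C₁ else C₂) ⊆ (if (w.head h).1 then D₂ else D₁)

/-- `𝓕(W)`: the set of nonempty words none of whose exact subwords (nonempty contiguous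
blocks of syllables) belongs to `W`. -/
def avoids (W : Set (List (Bool × ℤ))) : Set (List (Bool × ℤ)) :=
  {u | u ≠ [] ∧ ∀ v : List (Bool × ℤ), v ≠ [] → v <:+: u → v ∉ W}

private lemma evalW_append {H : Type*} [Group H] (a b : H) (l₁ l₂ : List (Bool × ℤ)) :
    evalW a b (l₁ ++ l₂) = evalW a b l₁ * evalW a b l₂ := by
  simp [evalW]

private lemma boundary_ne {w p s : List (Bool × ℤ)} (hred : IsReducedWord w)
    (h : (p ++ s) <:+: w) (hp : p ≠ []) (hs : s ≠ []) :
    (p.getLast hp).1 ≠ (s.head hs).1 := by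
  have hc : (p ++ s).Chain' (fun x y => x.1 ≠ y.1) := hred.1.infix h
  exact (List.isChain_append.1 hc).2.2 _ (by simp [List.getLast?_eq_getLast hp])
    _ (by simp [List.head?_eq_head hs])

private lemma if_flip {α : Type*} {x y : Bool} (h : x ≠ y) (A B : α) :
    (if x then A else B) = (if y then B else A) := by
  cases x <;> cases y <;> simp_all

/-- Ping-pong variant: let `H = ⟨a,b⟩` act on `X`, `X₁, X₂ ⊆ X` disjoint,
`∅ ≠ Kᵢ ⊆ Xᵢ`. Then every relator of `H` whose first and last letters are identical has an
exact subword belonging to `𝓕(W_{X→K}) \ W_{K→X}`. -/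
theorem stmt_14 {H X : Type*} [Group H] [MulAction H X] (a b : H)
    (X₁ X₂ K₁ K₂ : Set X) (hdisj : Disjoint X₁ X₂)
    (hK₁ : K₁.Nonempty) (hK₂ : K₂.Nonempty) (hK₁X : K₁ ⊆ X₁) (hK₂X : K₂ ⊆ X₂)
    (w : List (Bool × ℤ)) (hw : w ≠ []) (hred : IsReducedWord w)
    (hrel : evalW a b w = 1)
    (hfl : (w.head hw).1 = (w.getLast hw).1) :
    ∃ u : List (Bool × ℤ), u ≠ [] ∧ u <:+: w ∧
      u ∈ avoids {v | memW a b X₁ X₂ K₁ K₂ v} ∧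
      ¬ memW a b K₁ K₂ X₁ X₂ u := by
  by_contra hcon
  push_neg at hcon
  have hcon' : ∀ u : List (Bool × ℤ), u ≠ [] → u <:+: w →
      u ∈ avoids {v | memW a b X₁ X₂ K₁ K₂ v} → memW a b K₁ K₂ X₁ X₂ u := by
    intro u h1 h2 h3
    by_contra h4
    exact h4 (hcon u h1 h2 h3)
  -- key claim: every nonempty infix t of w maps K_{last t} into X_{head t}
  have key : ∀ n : ℕ, ∀ t : List (Bool × ℤ), t.length ≤ n → ∀ ht : t ≠ [], t <:+: w →
      evalW a b t • (if (t.getLast ht).1 then K₁ else K₂) ⊆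
        (if (t.head ht).1 then X₂ else X₁) := by
    intro n
    induction n with
    | zero =>
      intro t hlen ht _
      rw [Nat.le_zero, List.length_eq_zero_iff] at hlen
      exact absurd hlen ht
    | succ n ih =>
      intro t hlen ht hinf
      by_cases hF : ∀ v : List (Bool × ℤ), v ≠ [] → v <:+: t → ¬ memW a b X₁ X₂ K₁ K₂ v
      · obtain ⟨-, hne, hsub⟩ := hcon' t ht hinf ⟨ht, hF⟩
        exact hsub
      · push_neg at hF
        obtain ⟨v, hv0, hvt, hvW⟩ := hF
        obtain ⟨-, hvne, hvsub⟩ := hvW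
        obtain ⟨p, s, hps⟩ := hvt
        -- t = p ++ v ++ s
        have hvs_inf : (v ++ s) <:+: w :=
          (List.IsInfix.trans ⟨p, [], by simpa using hps⟩ hinf)
        -- core: evalW (v ++ s) maps K_{last t} into K_{head v}
        have hvs_ne : v ++ s ≠ [] := by simp [hv0]
        have core : evalW a b (v ++ s) • (if (t.getLast ht).1 then K₁ else K₂) ⊆
            (if (v.head hv0).1 then K₂ else K₁) := by
          rcases eq_or_ne s [] with hs | hs
          · subst hs
            have hlast : t.getLast ht = v.getLast hv0 := by
              subst hps; simp [List.getLast_append_of_ne_nil _ hv0]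
            rw [hlast]
            simp only [List.append_nil]
            refine subset_trans (Set.smul_set_mono ?_) hvsub
            split_ifs <;> [exact hK₁X; exact hK₂X]
          · have hs_len : s.length ≤ n := by
              have : t.length = p.length + v.length + s.length := by
                subst hps; simp [List.length_append]; ring
              have hv1 : 1 ≤ v.length := List.length_pos_iff.2 hv0
              omega
            have hs_inf : s <:+: w :=
              (List.IsInfix.trans ⟨p ++ v, [], by simpa using hps⟩ hinf)
            have hS := ih s hs_len hs hs_inf
            have hlast : t.getLast ht = s.getLast hs := by
              subst hps
              exact List.getLast_append_of_ne_nil _ hs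
            rw [hlast, evalW_append, mul_smul]
            have hb : (v.getLast hv0).1 ≠ (s.head hs).1 := boundary_ne hred hvs_inf hv0 hs
            calc evalW a b v • (evalW a b s • (if (s.getLast hs).1 then K₁ else K₂))
                ⊆ evalW a b v • (if (s.head hs).1 then X₂ else X₁) := Set.smul_set_mono hS
              _ = evalW a b v • (if (v.getLast hv0).1 then X₁ else X₂) := by
                  rw [if_flip hb]
              _ ⊆ (if (v.head hv0).1 then K₂ else K₁) := hvsub
        rcases eq_or_ne p [] with hp | hp
        · subst hp
          simp only [List.nil_append] at hps
          subst hps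
          have hhead : ((v ++ s).head hvs_ne) = v.head hv0 := List.head_append_left hv0
          rw [hhead]
          refine subset_trans core ?_
          split_ifs <;> [exact hK₂X; exact hK₁X]
        · have hp_len : p.length ≤ n := by
            have : t.length = p.length + v.length + s.length := by
              subst hps; simp [List.length_append]; ring
            have hv1 : 1 ≤ v.length := List.length_pos_iff.2 hv0
            omega
          have hp_inf : p <:+: w :=
            (List.IsInfix.trans ⟨[], v ++ s, by simpa using hps⟩ hinf)
          have hP := ih p hp_len hp hp_inf
          have hb : (p.getLast hp).1 ≠ ((v ++ s).head hvs_ne).1 := by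
            refine boundary_ne hred ?_ hp hvs_ne
            exact (List.IsInfix.trans ⟨[], [], by simpa using hps⟩ hinf)
          have hhead_vs : ((v ++ s).head hvs_ne) = v.head hv0 := List.head_append_left hv0
          have hhead : t.head ht = p.head hp := by
            subst hps
            exact (List.head_append_left (by simp [hp])).trans (List.head_append_left hp)
          have heval : evalW a b t = evalW a b p * evalW a b (v ++ s) := by
            subst hps
            simp [evalW_append, mul_assoc]
          rw [hhead, heval, mul_smul]
          calc evalW a b p • (evalW a b (v ++ s) • (if (t.getLast ht).1 then K₁ else K₂))
              ⊆ evalW a b p • (if (v.head hv0).1 then K₂ else K₁) := Set.smul_set_mono core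
            _ = evalW a b p • (if (p.getLast hp).1 then K₁ else K₂) := by
                rw [hhead_vs] at hb; rw [if_flip hb]
            _ ⊆ (if (p.head hp).1 then X₂ else X₁) := hP
  have hmain := key w.length w le_rfl hw (List.infix_rfl)
  rw [hrel, one_smul] at hmain
  rw [hfl] at hmain
  cases h : (w.getLast hw).1 with
  | true =>
    rw [h] at hmain
    simp at hmain
    obtain ⟨x, hx⟩ := hK₁
    exact (hdisj (Set.singleton_subset_iff.2 (hK₁X hx))
      (Set.singleton_subset_iff.2 (hmain hx))) rfl
  | false =>
    rw [h] at hmain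
    simp at hmain
    obtain ⟨x, hx⟩ := hK₂
    exact (hdisj (Set.singleton_subset_iff.2 (hmain hx))
      (Set.singleton_subset_iff.2 (hK₂X hx))) rfl
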